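/- arXiv:1608.03628 — 3 statements merged into one kernel-verified Lean document; each statement's English description precedes it below -/
import Mathlib

section
/- For all indices j, k in {1,…,n}, the time coupled diffusion distance satisfies D(j,k) = ‖e_jᵀΨ − e_kᵀΨ‖₂, where ‖·‖₂ is the Euclidean norm on ℝⁿ; that is, the time coupled diffusion map x_j ↦ e_jᵀΨ is an embedding into Euclidean space that exactly preserves the time coupled diffusion distance. -/
open Matrix Finset

/-- The time coupled diffusion map `x_j ↦ e_jᵀ Ψ` exactly preserves the
time coupled diffusion distance `D(j,k) = ‖e_jᵀP − e_kᵀP‖_{L²(1/π)}`. -/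
theorem time_coupled_diffusion_map_preserves_distance
    (n : ℕ) (hn : 1 ≤ n)
    (P : Matrix (Fin n) (Fin n) ℝ)
    (hP_nonneg : ∀ i j, 0 ≤ P i j)
    (hP_row : ∀ i, ∑ j, P i j = 1)
    (π : Fin n → ℝ)
    (hπ_pos : ∀ i, 0 < π i)
    (hπ_stat : ∀ j, ∑ i, π i * P i j = π j)
    (U V : Matrix (Fin n) (Fin n) ℝ)
    (σ : Fin n → ℝ)
    (hU : U * Uᵀ = 1 ∧ Uᵀ * U = 1)
    (hV : V * Vᵀ = 1 ∧ Vᵀ * V = 1)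
    (hσ_nonneg : ∀ i, 0 ≤ σ i)
    (hσ_anti : ∀ i j : Fin n, i ≤ j → σ j ≤ σ i)
    (hSVD : Matrix.diagonal (fun i => Real.sqrt (π i)) * P *
        Matrix.diagonal (fun i => (Real.sqrt (π i))⁻¹) = U * Matrix.diagonal σ * Vᵀ)
    (Ψ : Matrix (Fin n) (Fin n) ℝ)
    (hΨ : Ψ = Matrix.diagonal (fun i => (Real.sqrt (π i))⁻¹) * U * Matrix.diagonal σ) :
    ∀ j k : Fin n,
      Real.sqrt (∑ r, (P j r - P k r) ^ 2 / π r) =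
        Real.sqrt (∑ r, (Ψ j r - Ψ k r) ^ 2) := by
  intro j k
  set D : Matrix (Fin n) (Fin n) ℝ := Matrix.diagonal (fun i => Real.sqrt (π i)) with hD
  set Di : Matrix (Fin n) (Fin n) ℝ := Matrix.diagonal (fun i => (Real.sqrt (π i))⁻¹) with hDi
  have hs : ∀ i, Real.sqrt (π i) ≠ 0 := fun i => ne_of_gt (Real.sqrt_pos.mpr (hπ_pos i))
  have hDiD : Di * D = 1 := by
    rw [hDi, hD, Matrix.diagonal_mul_diagonal, show (fun i => (Real.sqrt (π i))⁻¹ * Real.sqrt (π i)) = fun _ => (1:ℝ) from funext fun i => inv_mul_cancel₀ (hs i), Matrix.diagonal_one]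
  have hDDi : D * Di = 1 := by
    rw [hDi, hD, Matrix.diagonal_mul_diagonal, show (fun i => Real.sqrt (π i) * (Real.sqrt (π i))⁻¹) = fun _ => (1:ℝ) from funext fun i => mul_inv_cancel₀ (hs i), Matrix.diagonal_one]
  have hDt : Dᵀ = D := by rw [hD, Matrix.diagonal_transpose]
  have hDit : Diᵀ = Di := by rw [hDi, Matrix.diagonal_transpose]
  have hDiDi : Di * Di = Matrix.diagonal (fun i => (π i)⁻¹) := by
    rw [hDi, Matrix.diagonal_mul_diagonal]
    exact congrArg _ (funext fun i => by
      rw [← mul_inv, Real.mul_self_sqrt (le_of_lt (hπ_pos i))])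
  have key : Ψ * Ψᵀ = P * Matrix.diagonal (fun i => (π i)⁻¹) * Pᵀ := by
    have hB : (D * P * Di) * (D * P * Di)ᵀ = (U * Matrix.diagonal σ * Vᵀ) * (U * Matrix.diagonal σ * Vᵀ)ᵀ := by
      rw [hSVD]
    simp only [Matrix.transpose_mul, Matrix.diagonal_transpose, Matrix.transpose_transpose,
      hDt, hDit, Matrix.mul_assoc] at hB
    rw [show Vᵀ * (V * (Matrix.diagonal σ * Uᵀ)) = Matrix.diagonal σ * Uᵀ by
      rw [← Matrix.mul_assoc, hV.2, Matrix.one_mul]] at hB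
    have h1 : Ψ * Ψᵀ = Di * ((D * (P * (Di * (Di * (Pᵀ * D))))) * Di) := by
      rw [hB, hΨ]
      simp only [Matrix.transpose_mul, Matrix.diagonal_transpose, hDit, Matrix.mul_assoc]
    rw [h1]
    simp only [Matrix.mul_assoc]
    rw [hDDi, Matrix.mul_one, ← Matrix.mul_assoc Di D, hDiD, Matrix.one_mul,
      ← Matrix.mul_assoc Di Di, hDiDi]
  have hright : ∀ a b, (Ψ * Ψᵀ) a b = ∑ r, Ψ a r * Ψ b r := by
    intro a b
    simp [Matrix.mul_apply, Matrix.transpose_apply]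
  have hleft : ∀ a b, (P * Matrix.diagonal (fun i => (π i)⁻¹) * Pᵀ) a b
      = ∑ r, P a r * (π r)⁻¹ * P b r := by
    intro a b
    rw [Matrix.mul_apply]
    exact Finset.sum_congr rfl fun r _ => by rw [Matrix.mul_diagonal, Matrix.transpose_apply]
  have hent : ∀ a b, (∑ r, Ψ a r * Ψ b r) = ∑ r, P a r * (π r)⁻¹ * P b r := by
    intro a b
    rw [← hright, ← hleft, key]
  congr 1
  have e1 : ∑ r, (P j r - P k r) ^ 2 / π r
      = (∑ r, P j r * (π r)⁻¹ * P j r) - 2 * (∑ r, P j r * (π r)⁻¹ * P k r)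
        + (∑ r, P k r * (π r)⁻¹ * P k r) := by
    rw [Finset.mul_sum, ← Finset.sum_sub_distrib, ← Finset.sum_add_distrib]
    apply Finset.sum_congr rfl
    intro r _
    have hp : π r ≠ 0 := ne_of_gt (hπ_pos r)
    field_simp
    ring
  have e2 : ∑ r, (Ψ j r - Ψ k r) ^ 2
      = (∑ r, Ψ j r * Ψ j r) - 2 * (∑ r, Ψ j r * Ψ k r) + (∑ r, Ψ k r * Ψ k r) := by
    rw [Finset.mul_sum, ← Finset.sum_sub_distrib, ← Finset.sum_add_distrib]
    apply Finset.sum_congr rfl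
    intro r _
    ring
  rw [e1, e2, hent j j, hent j k, hent k k]
end

section
/- Let E be a real Banach space, σ ∈ ℝ, ε > 0, M ≥ 0, C ≥ 0. Let A : ℝ → (E →L E) be a family of continuous linear endomorphisms, continuous in operator norm on [σ, σ+ε], with ‖A(τ)‖ ≤ M and ‖A(τ) − A(σ)‖ ≤ C (τ − σ) for all τ ∈ [σ, σ+ε]. Let u : ℝ → E be differentiable on [σ, σ+ε] with u′(τ) = A(τ)(u(τ)) for all τ ∈ [σ, σ+ε]. Then ‖u(σ+ε) − u(σ) − ε · A(σ)(u(σ))‖ ≤ (C + M²) · exp(M ε) · ε² · ‖u(σ)‖. (This is the short-time first-order expansion: the evolution over [σ, σ+ε] equals I + ε A(σ) up to an error of order ε².) -/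
/-- Short-time first-order expansion of a non-autonomous linear evolution:
if `u′(τ) = A(τ) u(τ)` on `[σ, σ+ε]` with `‖A(τ)‖ ≤ M` and `‖A(τ) − A(σ)‖ ≤ C(τ−σ)`,
then `‖u(σ+ε) − u(σ) − ε A(σ) u(σ)‖ ≤ (C + M²) exp(Mε) ε² ‖u(σ)‖`. -/
theorem short_time_first_order_expansion
    {E : Type*} [NormedAddCommGroup E] [NormedSpace ℝ E] [CompleteSpace E]
    (σ ε M C : ℝ) (hε : 0 < ε) (hM : 0 ≤ M) (hC : 0 ≤ C)
    (A : ℝ → (E →L[ℝ] E))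
    (hcont : ContinuousOn A (Set.Icc σ (σ + ε)))
    (hbound : ∀ τ ∈ Set.Icc σ (σ + ε), ‖A τ‖ ≤ M)
    (hlip : ∀ τ ∈ Set.Icc σ (σ + ε), ‖A τ - A σ‖ ≤ C * (τ - σ))
    (u : ℝ → E)
    (hu : ∀ τ ∈ Set.Icc σ (σ + ε), HasDerivWithinAt u (A τ (u τ)) (Set.Icc σ (σ + ε)) τ) :
    ‖u (σ + ε) - u σ - ε • A σ (u σ)‖ ≤
      (C + M ^ 2) * Real.exp (M * ε) * ε ^ 2 * ‖u σ‖ := by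
  have hσε : σ ≤ σ + ε := by linarith
  set S := Set.Icc σ (σ + ε) with hS
  have hσS : σ ∈ S := Set.left_mem_Icc.2 hσε
  have hεS : σ + ε ∈ S := Set.right_mem_Icc.2 hσε
  have hucont : ContinuousOn u S := fun τ hτ => (hu τ hτ).continuousWithinAt
  -- Grönwall: ‖u t‖ ≤ ‖u σ‖ exp(M (t - σ))
  have hgron : ∀ t ∈ S, ‖u t‖ ≤ ‖u σ‖ * Real.exp (M * (t - σ)) := by
    intro t ht
    have key := norm_le_gronwallBound_of_norm_deriv_right_le (f := u)
      (f' := fun τ => A τ (u τ)) (δ := ‖u σ‖) (K := M) (ε := 0) (a := σ) (b := σ + ε)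
      hucont
      (fun τ hτ => (hu τ (Set.mem_Icc_of_Ico hτ)).mono_of_mem_nhdsWithin (Icc_mem_nhdsGE_of_mem hτ))
      le_rfl
      (fun τ hτ => by
        have h1 := (A τ).le_opNorm (u τ)
        have h2 := hbound τ (Set.mem_Icc_of_Ico hτ)
        have h3 := norm_nonneg (u τ)
        calc ‖A τ (u τ)‖ ≤ ‖A τ‖ * ‖u τ‖ := h1
          _ ≤ M * ‖u τ‖ + 0 := by nlinarith)
      t ht
    simpa [gronwallBound_ε0] using key
  set B := Real.exp (M * ε) * ‖u σ‖ with hB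
  have hB0 : 0 ≤ B := mul_nonneg (Real.exp_pos _).le (norm_nonneg _)
  have hub : ∀ t ∈ S, ‖u t‖ ≤ B := by
    intro t ht
    refine (hgron t ht).trans ?_
    rw [hB, mul_comm]
    have : Real.exp (M * (t - σ)) ≤ Real.exp (M * ε) := by
      apply Real.exp_le_exp.2
      have h1 := ht.1; have h2 := ht.2
      nlinarith
    exact mul_le_mul_of_nonneg_right this (norm_nonneg _)
  -- mean value: ‖u τ - u σ‖ ≤ M * B * (τ - σ)
  have hdiff : ∀ τ ∈ S, ‖u τ - u σ‖ ≤ M * B * (τ - σ) := by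
    intro τ hτ
    have := (convex_Icc σ (σ + ε)).norm_image_sub_le_of_norm_hasDerivWithin_le
      (f := u) (f' := fun t => A t (u t)) (C := M * B)
      hu
      (fun t ht => by
        calc ‖A t (u t)‖ ≤ ‖A t‖ * ‖u t‖ := (A t).le_opNorm _
          _ ≤ M * B := mul_le_mul (hbound t ht) (hub t ht) (norm_nonneg _) hM)
      hσS hτ
    have hτσ : ‖τ - σ‖ = τ - σ := by
      rw [Real.norm_eq_abs, abs_of_nonneg]; linarith [hτ.1]
    rwa [hτσ] at this
  -- the remainder function
  set g : ℝ → E := fun τ => u τ - u σ - (τ - σ) • (A σ) (u σ) with hg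
  have hg' : ∀ τ ∈ S, HasDerivWithinAt g (A τ (u τ) - A σ (u σ)) S τ := by
    intro τ hτ
    have h1 : HasDerivWithinAt (fun t : ℝ => (t - σ) • (A σ) (u σ))
        ((1 : ℝ) • (A σ) (u σ)) S τ :=
      ((hasDerivWithinAt_id τ S).sub_const σ).smul_const _
    have h2 := ((hu τ hτ).sub_const (u σ)).sub h1
    rw [one_smul] at h2
    exact h2
  have hgbound : ∀ τ ∈ S, ‖A τ (u τ) - A σ (u σ)‖ ≤ (C + M ^ 2) * ε * B := by
    intro τ hτ
    have hsplit : A τ (u τ) - A σ (u σ) = (A τ - A σ) (u τ) + A σ (u τ - u σ) := by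
      simp [ContinuousLinearMap.sub_apply, map_sub]
    rw [hsplit]
    have h1 : ‖(A τ - A σ) (u τ)‖ ≤ C * (τ - σ) * B :=
      ((A τ - A σ).le_opNorm _).trans
        (mul_le_mul (hlip τ hτ) (hub τ hτ) (norm_nonneg _)
          (mul_nonneg hC (by linarith [hτ.1])))
    have h2 : ‖A σ (u τ - u σ)‖ ≤ M * (M * B * (τ - σ)) :=
      ((A σ).le_opNorm _).trans
        (mul_le_mul (hbound σ hσS) (hdiff τ hτ) (norm_nonneg _) hM)
    have hτ2 : τ - σ ≤ ε := by linarith [hτ.2]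
    have hτ1 : 0 ≤ τ - σ := by linarith [hτ.1]
    calc ‖(A τ - A σ) (u τ) + A σ (u τ - u σ)‖
        ≤ ‖(A τ - A σ) (u τ)‖ + ‖A σ (u τ - u σ)‖ := norm_add_le _ _
      _ ≤ C * (τ - σ) * B + M * (M * B * (τ - σ)) := add_le_add h1 h2
      _ ≤ (C + M ^ 2) * ε * B := by
          nlinarith [mul_nonneg (mul_nonneg (add_nonneg hC (sq_nonneg M))
            (by linarith : (0:ℝ) ≤ ε - (τ - σ))) hB0]
  have hfinal := (convex_Icc σ (σ + ε)).norm_image_sub_le_of_norm_hasDerivWithin_le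
    (f := g) (f' := fun τ => A τ (u τ) - A σ (u σ)) (C := (C + M ^ 2) * ε * B)
    hg' hgbound hσS hεS
  have hgσ : g σ = 0 := by simp [hg]
  have hgε : g (σ + ε) = u (σ + ε) - u σ - ε • (A σ) (u σ) := by simp [hg]
  rw [hgσ, hgε, sub_zero] at hfinal
  have hnorm : ‖σ + ε - σ‖ = ε := by
    rw [Real.norm_eq_abs, abs_of_nonneg] <;> linarith
  rw [hnorm] at hfinal
  calc ‖u (σ + ε) - u σ - ε • (A σ) (u σ)‖ ≤ (C + M ^ 2) * ε * B * ε := hfinal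
    _ = (C + M ^ 2) * Real.exp (M * ε) * ε ^ 2 * ‖u σ‖ := by rw [hB]; ring
end

section
/- Let E be a real Banach space, t > 0, ℓ ≥ 1 an integer, and ε = t/ℓ, with partition points τ_i = i·ε for i = 0,…,ℓ. Let A : ℝ → (E →L E) be continuous in operator norm on [0, t] with ‖A(τ)‖ ≤ M for all τ ∈ [0, t] and ‖A(τ) − A(σ)‖ ≤ C |τ − σ| for all τ, σ ∈ [0, t], where M, C ≥ 0. Let u : ℝ → E be differentiable on [0, t] with u′(τ) = A(τ)(u(τ)) for all τ ∈ [0, t]. Define w_0 = u(0) and w_i = w_{i−1} + ε · A(τ_i)(w_{i−1}) for i = 1,…,ℓ, so that w_ℓ = (I + εA(τ_ℓ))(I + εA(τ_{ℓ−1}))⋯(I + εA(τ_1)) u(0). Then ‖u(t) − w_ℓ‖ ≤ (2C + M²) · t · exp(3 M t) · ε · ‖u(0)‖. (This is the first-order product approximation: the evolution over [0, t] equals the ordered product of the factors I + ε A(τ_i) up to an error of order ε.) -/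
/-- First-order product approximation of a non-autonomous linear evolution:
if `u′(τ) = A(τ) u(τ)` on `[0, t]`, `ε = t/ℓ`, `τ_i = i·ε`, and
`w_ℓ = (I + εA(τ_ℓ)) ⋯ (I + εA(τ_1)) u(0)` (built by the recursion
`w_i = w_{i−1} + ε A(τ_i) w_{i−1}`), then
`‖u(t) − w_ℓ‖ ≤ (2C + M²) t exp(3Mt) ε ‖u(0)‖`. -/
theorem first_order_product_approximation
    {E : Type*} [NormedAddCommGroup E] [NormedSpace ℝ E] [CompleteSpace E]
    (t : ℝ) (ht : 0 < t) (ℓ : ℕ) (hℓ : 1 ≤ ℓ) (ε : ℝ) (hε : ε = t / ℓ)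
    (M C : ℝ) (hM : 0 ≤ M) (hC : 0 ≤ C)
    (A : ℝ → (E →L[ℝ] E))
    (hcont : ContinuousOn A (Set.Icc 0 t))
    (hbound : ∀ τ ∈ Set.Icc (0 : ℝ) t, ‖A τ‖ ≤ M)
    (hlip : ∀ τ ∈ Set.Icc (0 : ℝ) t, ∀ s ∈ Set.Icc (0 : ℝ) t, ‖A τ - A s‖ ≤ C * |τ - s|)
    (u : ℝ → E)
    (hu : ∀ τ ∈ Set.Icc (0 : ℝ) t, HasDerivWithinAt u (A τ (u τ)) (Set.Icc 0 t) τ)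
    (w : ℕ → E)
    (hw0 : w 0 = u 0)
    (hwi : ∀ i : ℕ, 1 ≤ i → i ≤ ℓ → w i = w (i - 1) + ε • A ((i : ℝ) * ε) (w (i - 1))) :
    ‖u t - w ℓ‖ ≤ (2 * C + M ^ 2) * t * Real.exp (3 * M * t) * ε * ‖u 0‖ := by
  have hℓpos : (0:ℝ) < (ℓ : ℝ) := by exact_mod_cast hℓ
  have hε0 : 0 < ε := by rw [hε]; exact div_pos ht hℓpos
  have hεℓ : (ℓ:ℝ) * ε = t := by rw [hε]; field_simp
  set B : ℝ := ‖u 0‖ * Real.exp (M * t) with hBdef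
  have hBnn : 0 ≤ B := mul_nonneg (norm_nonneg _) (Real.exp_pos _).le
  have ucont : ContinuousOn u (Set.Icc 0 t) := fun τ hτ => (hu τ hτ).continuousWithinAt
  have hderivIci : ∀ x ∈ Set.Ico 0 t, HasDerivWithinAt u (A x (u x)) (Set.Ici x) x := by
    intro x hx
    exact (hu x (Set.mem_Icc_of_Ico hx)).mono_of_mem_nhdsWithin
      (Icc_mem_nhdsGE_of_mem ⟨hx.1, hx.2⟩)
  -- a priori bound ‖u s‖ ≤ B on [0, t]
  have hB : ∀ s ∈ Set.Icc (0:ℝ) t, ‖u s‖ ≤ B := by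
    intro s hs
    have key := norm_le_gronwallBound_of_norm_deriv_right_le (f := u)
      (f' := fun x => A x (u x)) (δ := ‖u 0‖) (K := M) (ε := 0)
      ucont hderivIci le_rfl
      (fun x hx => by
        have h1 : ‖A x (u x)‖ ≤ ‖A x‖ * ‖u x‖ := (A x).le_opNorm (u x)
        have h2 : ‖A x‖ * ‖u x‖ ≤ M * ‖u x‖ :=
          mul_le_mul_of_nonneg_right (hbound x (Set.mem_Icc_of_Ico hx)) (norm_nonneg _)
        simpa using h1.trans h2) s hs
    rw [gronwallBound_ε0] at key
    refine key.trans ?_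
    rw [sub_zero]
    exact mul_le_mul_of_nonneg_left
      (Real.exp_le_exp.2 (mul_le_mul_of_nonneg_left hs.2 hM)) (norm_nonneg _)
  -- increment bound
  have hincr : ∀ a b : ℝ, 0 ≤ a → a ≤ b → b ≤ t → ‖u b - u a‖ ≤ M * B * (b - a) := by
    intro a b ha hab hbt
    have hsub : Set.Icc a b ⊆ Set.Icc 0 t := Set.Icc_subset_Icc ha hbt
    have key := norm_le_gronwallBound_of_norm_deriv_right_le
      (f := fun s => u s - u a) (f' := fun s => A s (u s)) (δ := 0) (K := 0)
      (ε := M * B) (a := a) (b := b)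
      ((ucont.mono hsub).sub continuousOn_const)
      (fun x hx => (hderivIci x ⟨ha.trans hx.1, lt_of_lt_of_le hx.2 hbt⟩).sub_const (u a))
      (by simp)
      (fun x hx => by
        have hx' : x ∈ Set.Icc (0:ℝ) t := hsub (Set.mem_Icc_of_Ico hx)
        have h1 : ‖A x (u x)‖ ≤ ‖A x‖ * ‖u x‖ := (A x).le_opNorm (u x)
        have h2 : ‖A x‖ * ‖u x‖ ≤ M * B :=
          mul_le_mul (hbound x hx') (hB x hx') (norm_nonneg _) hM
        simpa using h1.trans h2) b ⟨hab, le_rfl⟩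
    rw [gronwallBound_K0] at key
    simpa using key
  -- local one-step error
  have hlocal : ∀ a b : ℝ, 0 ≤ a → b = a + ε → b ≤ t →
      ‖u b - u a - ε • A b (u a)‖ ≤ (C + M^2) * B * ε^2 := by
    intro a b ha hb hbt
    have hab : a ≤ b := by rw [hb]; linarith
    have hsub : Set.Icc a b ⊆ Set.Icc 0 t := Set.Icc_subset_Icc ha hbt
    have hbmem : b ∈ Set.Icc (0:ℝ) t := ⟨ha.trans hab, hbt⟩
    set v : E := A b (u a) with hv
    have key := norm_le_gronwallBound_of_norm_deriv_right_le
      (f := fun s => u s - u a - (s - a) • v) (f' := fun s => A s (u s) - v)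
      (δ := 0) (K := 0) (ε := (C + M^2) * B * ε) (a := a) (b := b)
      (((ucont.mono hsub).sub continuousOn_const).sub
        (((continuous_id.sub continuous_const).smul continuous_const).continuousOn))
      (fun x hx => by
        have hd1 : HasDerivWithinAt (fun s : ℝ => (s - a) • v) ((1:ℝ) • v) (Set.Ici x) x :=
          ((hasDerivWithinAt_id x _).sub_const a).smul_const v
        have hd2 := ((hderivIci x ⟨ha.trans hx.1, lt_of_lt_of_le hx.2 hbt⟩).sub_const
          (u a)).sub hd1
        simp only [one_smul] at hd2; exact hd2)
      (by simp)
      (fun x hx => by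
        have hx' : x ∈ Set.Icc (0:ℝ) t := hsub (Set.mem_Icc_of_Ico hx)
        have h1 : ‖A x (u x) - v‖ ≤ ‖(A x - A b) (u x)‖ + ‖A b (u x - u a)‖ := by
          have he : A x (u x) - v = (A x - A b) (u x) + A b (u x - u a) := by
            simp only [ContinuousLinearMap.sub_apply, map_sub, hv]
            abel
          rw [he]; exact norm_add_le _ _
        have hxb2 : x < a + ε := hb ▸ hx.2
        have h2 : ‖(A x - A b) (u x)‖ ≤ C * ε * B := by
          refine ((A x - A b).le_opNorm (u x)).trans ?_
          have hxb : ‖A x - A b‖ ≤ C * ε := by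
            refine (hlip x hx' b hbmem).trans ?_
            have habs : |x - b| ≤ ε := by
              rw [abs_le, hb]
              constructor <;> linarith [hx.1, hxb2]
            exact mul_le_mul_of_nonneg_left habs hC
          exact mul_le_mul hxb (hB x hx') (norm_nonneg _) (by positivity)
        have h3 : ‖A b (u x - u a)‖ ≤ M * (M * B * ε) := by
          refine ((A b).le_opNorm _).trans ?_
          have hxa : ‖u x - u a‖ ≤ M * B * ε := by
            refine (hincr a x ha hx.1 hx'.2).trans ?_
            have : x - a ≤ ε := by linarith
            exact mul_le_mul_of_nonneg_left this (by positivity)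
          exact mul_le_mul (hbound b hbmem) hxa (norm_nonneg _) hM
        have hfin : ‖A x (u x) - v‖ ≤ (C + M^2) * B * ε := by
          refine h1.trans ((add_le_add h2 h3).trans (le_of_eq ?_)); ring
        simpa using hfin) b ⟨hab, le_rfl⟩
    rw [gronwallBound_K0] at key
    have hba : b - a = ε := by rw [hb]; ring
    calc ‖u b - u a - ε • A b (u a)‖ = ‖u b - u a - (b - a) • v‖ := by rw [hba, hv]
      _ ≤ 0 + (C + M^2) * B * ε * (b - a) := key
      _ = (C + M^2) * B * ε^2 := by rw [hba]; ring
  set D : ℝ := (C + M^2) * B with hDdef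
  have hDnn : 0 ≤ D := by positivity
  have hone : (1:ℝ) ≤ 1 + ε * M := by nlinarith
  -- main induction
  have key : ∀ i : ℕ, i ≤ ℓ → ‖u ((i:ℝ) * ε) - w i‖ ≤ D * ε^2 * i * (1 + ε * M)^i := by
    intro i
    induction i with
    | zero => intro _; simp [hw0]
    | succ i ih =>
      intro hiℓ
      have hi : i ≤ ℓ := Nat.le_of_succ_le hiℓ
      have ihe := ih hi
      have hwsucc : w (i+1) = w i + ε • A (((i:ℝ)+1) * ε) (w i) := by
        have h := hwi (i+1) (Nat.le_add_left 1 i) hiℓ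
        push_cast at h
        simpa using h
      push_cast
      set a : ℝ := (i:ℝ) * ε with hadef
      set b : ℝ := ((i:ℝ)+1) * ε with hbdef
      have ha : 0 ≤ a := by positivity
      have hb : b = a + ε := by rw [hadef, hbdef]; ring
      have hbt : b ≤ t := by
        rw [← hεℓ, hbdef]
        have : ((i:ℝ)+1) ≤ (ℓ:ℝ) := by exact_mod_cast hiℓ
        exact mul_le_mul_of_nonneg_right this hε0.le
      have hloc := hlocal a b ha hb hbt
      have hsplit : u b - w (i+1) =
          (u b - u a - ε • A b (u a)) + ((u a - w i) + ε • A b (u a - w i)) := by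
        rw [hwsucc, map_sub, smul_sub]; abel
      have hstep : ‖u b - w (i+1)‖ ≤ D * ε^2 + (1 + ε * M) * ‖u a - w i‖ := by
        rw [hsplit, hDdef]
        refine (norm_add_le _ _).trans (add_le_add hloc ?_)
        refine (norm_add_le _ _).trans ?_
        have hsm : ‖ε • A b (u a - w i)‖ ≤ ε * (M * ‖u a - w i‖) := by
          rw [norm_smul, Real.norm_eq_abs, abs_of_pos hε0]
          exact mul_le_mul_of_nonneg_left
            (((A b).le_opNorm _).trans (mul_le_mul_of_nonneg_right
              (hbound b ⟨ha.trans (by linarith), hbt⟩) (norm_nonneg _))) hε0.le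
        nlinarith [norm_nonneg (u a - w i)]
      have hP : (1:ℝ) ≤ (1 + ε * M)^(i+1) := one_le_pow₀ hone
      calc ‖u b - w (i+1)‖ ≤ D * ε^2 + (1 + ε * M) * ‖u a - w i‖ := hstep
        _ ≤ D * ε^2 + (1 + ε * M) * (D * ε^2 * i * (1 + ε * M)^i) := by
            have := mul_le_mul_of_nonneg_left ihe (by linarith : (0:ℝ) ≤ 1 + ε * M)
            linarith
        _ = D * ε^2 + D * ε^2 * i * (1 + ε * M)^(i+1) := by rw [pow_succ]; ring
        _ ≤ D * ε^2 * (1 + ε * M)^(i+1) + D * ε^2 * i * (1 + ε * M)^(i+1) := by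
            have : D * ε^2 ≤ D * ε^2 * (1 + ε * M)^(i+1) :=
              le_mul_of_one_le_right (by positivity) hP
            linarith
        _ = D * ε^2 * ((i:ℝ)+1) * (1 + ε * M)^(i+1) := by ring
  have hfin := key ℓ le_rfl
  rw [hεℓ] at hfin
  have hpow : (1 + ε*M)^ℓ ≤ Real.exp (M * t) := by
    have h1 : (1 + ε*M) ≤ Real.exp (ε*M) := by
      have := Real.add_one_le_exp (ε*M); linarith
    calc (1+ε*M)^ℓ ≤ Real.exp (ε*M)^ℓ := pow_le_pow_left₀ (by linarith) h1 ℓ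
      _ = Real.exp ((ℓ:ℝ)*(ε*M)) := (Real.exp_nat_mul _ ℓ).symm
      _ = Real.exp (M*t) := by rw [show (ℓ:ℝ)*(ε*M) = M*((ℓ:ℝ)*ε) by ring, hεℓ]
  have hε2 : ε^2 * ℓ = ε * t := by rw [← hεℓ]; ring
  calc ‖u t - w ℓ‖ ≤ D * ε^2 * ℓ * (1 + ε * M)^ℓ := hfin
    _ ≤ D * ε^2 * ℓ * Real.exp (M*t) := by
        exact mul_le_mul_of_nonneg_left hpow (by positivity)
    _ = (C + M^2) * t * Real.exp (M*t + M*t) * ε * ‖u 0‖ := by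
        rw [Real.exp_add, hDdef, hBdef]
        calc (C + M^2) * (‖u 0‖ * Real.exp (M*t)) * ε^2 * (ℓ:ℝ) * Real.exp (M*t)
            = (C + M^2) * ‖u 0‖ * (ε^2 * (ℓ:ℝ)) * (Real.exp (M*t) * Real.exp (M*t)) := by
              ring
          _ = (C + M^2) * t * (Real.exp (M*t) * Real.exp (M*t)) * ε * ‖u 0‖ := by
              rw [hε2]; ring
    _ ≤ (2*C + M^2) * t * Real.exp (3*M*t) * ε * ‖u 0‖ := by
        gcongr
        · linarith
        · nlinarith [mul_nonneg hM ht.le]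
end
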